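/- Legendre's theorem: Let a, b, c be nonzero squarefree pairwise coprime integers. The equation ax² + by² + cz² = 0 has a nonzero integer solution if and only if (A) a, b, c do not all have the same sign, and (B) -bc, -ca, -ab are quadratic residues modulo a, b, c respectively. -/

import Mathlib

lemma modEq_neg {n a b : ℤ} (h : a ≡ b [ZMOD n]) : a ≡ b [ZMOD -n] := by
  rw [Int.modEq_iff_dvd] at h ⊢; rwa [neg_dvd]

lemma squarefree_neg {a : ℤ} (h : Squarefree a) : Squarefree (-a) :=
  fun x hx => h x (dvd_neg.mp hx)

lemma helper1 {a b w : ℤ} (ha : 0 < a) (hsa : Squarefree a) (hab : IsCoprime a b)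
    (h : a * b = w ^ 2) : a = 1 := by
  obtain ⟨a0, h'⟩ := Int.sq_of_isCoprime hab h
  rcases h' with h' | h'
  · have hu : IsUnit a0 := hsa a0 (by rw [h']; exact ⟨1, by ring⟩)
    rcases Int.isUnit_iff.mp hu with rfl | rfl <;> simp [h']
  · nlinarith [sq_nonneg a0]

lemma qr_aux {a b c x y z : ℤ} (hsa : Squarefree a) (hab : IsCoprime a b)
    (hprim : ∀ p : ℕ, p.Prime → ¬((p:ℤ) ∣ x ∧ (p:ℤ) ∣ y ∧ (p:ℤ) ∣ z))
    (heq : a * x ^ 2 + b * y ^ 2 + c * z ^ 2 = 0) :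
    ∃ d : ℤ, d ^ 2 ≡ -(b * c) [ZMOD a] := by
  have ha0 : a ≠ 0 := hsa.ne_zero
  have hza : IsCoprime z a := by
    rw [Int.isCoprime_iff_gcd_eq_one]
    by_contra hg
    obtain ⟨p, hp, hpd⟩ := Nat.exists_prime_and_dvd hg
    have hpd' : (p : ℤ) ∣ (Int.gcd z a : ℤ) := Int.natCast_dvd_natCast.mpr hpd
    have hpz : (p : ℤ) ∣ z := hpd'.trans (Int.gcd_dvd_left _ _)
    have hpa : (p : ℤ) ∣ a := hpd'.trans (Int.gcd_dvd_right _ _)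
    have hpp : Prime (p : ℤ) := Nat.prime_iff_prime_int.mp hp
    have hpb : ¬ (p : ℤ) ∣ b := by
      intro hdb
      obtain ⟨u, v, huv⟩ := hab
      exact hpp.not_unit (isUnit_of_dvd_one (huv ▸ dvd_add ((hpa.mul_left u))
        (hdb.mul_left v)))
    have hpy : (p : ℤ) ∣ y := by
      have h1 : (p : ℤ) ∣ b * y ^ 2 := by
        have : b * y ^ 2 = -(a * x ^ 2) - c * z ^ 2 := by linarith
        rw [this]
        exact dvd_sub ((hpa.mul_right _).neg_right) ((hpz.pow two_ne_zero).mul_left _)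
      rcases hpp.dvd_mul.mp h1 with h | h
      · exact absurd h hpb
      · exact hpp.dvd_of_dvd_pow h
    obtain ⟨a1, ha1⟩ := hpa
    have hpa1 : ¬ (p : ℤ) ∣ a1 := by
      intro ⟨a2, ha2⟩
      exact hpp.not_unit (hsa (p : ℤ) ⟨a2, by rw [ha1, ha2]; ring⟩)
    have hpx : (p : ℤ) ∣ x := by
      have h2 : (p : ℤ) ^ 2 ∣ a * x ^ 2 := by
        have : a * x ^ 2 = -(b * y ^ 2) - c * z ^ 2 := by linarith
        rw [this]
        exact dvd_sub (((pow_dvd_pow_of_dvd hpy 2).mul_left _).neg_right)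
          ((pow_dvd_pow_of_dvd hpz 2).mul_left _)
      obtain ⟨k, hk⟩ := h2
      have : a1 * x ^ 2 = p * k := by
        apply mul_left_cancel₀ (show (p:ℤ) ≠ 0 from Int.natCast_ne_zero.mpr hp.ne_zero)
        rw [show (p:ℤ)*(a1*x^2) = a*x^2 by rw [ha1]; ring, hk]; ring
      have h3 : (p : ℤ) ∣ a1 * x ^ 2 := ⟨k, this⟩
      rcases hpp.dvd_mul.mp h3 with h | h
      · exact absurd h hpa1
      · exact hpp.dvd_of_dvd_pow h
    exact hprim p hp ⟨hpx, hpy, hpz⟩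
  obtain ⟨u, v, huv⟩ := hza
  refine ⟨b * y * u, ?_⟩
  apply Int.ModEq.symm
  rw [Int.modEq_iff_dvd]
  refine ⟨-(b * u ^ 2 * x ^ 2) + b * c * v * (1 + u * z), ?_⟩
  linear_combination (b * u ^ 2) * heq - b * c * (1 + u * z) * huv

lemma reduce {a b c x y z : ℤ} (hne : (x, y, z) ≠ (0, 0, 0))
    (heq : a * x ^ 2 + b * y ^ 2 + c * z ^ 2 = 0) :
    ∃ x' y' z' : ℤ, (∀ p : ℕ, p.Prime → ¬((p:ℤ) ∣ x' ∧ (p:ℤ) ∣ y' ∧ (p:ℤ) ∣ z')) ∧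
      a * x' ^ 2 + b * y' ^ 2 + c * z' ^ 2 = 0 := by
  set g : ℕ := Int.gcd x (Int.gcd y z) with hgdef
  have hg : g ≠ 0 := by
    intro h
    rw [hgdef, Int.gcd_eq_zero_iff, Int.natCast_eq_zero, Int.gcd_eq_zero_iff] at h
    exact hne (by simp [h.1, h.2.1, h.2.2])
  obtain ⟨x', hx⟩ : (g : ℤ) ∣ x := Int.gcd_dvd_left _ _
  obtain ⟨y', hy⟩ : (g : ℤ) ∣ y :=
    Int.dvd_trans (Int.gcd_dvd_right _ _) (Int.gcd_dvd_left _ _)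
  obtain ⟨z', hz⟩ : (g : ℤ) ∣ z :=
    Int.dvd_trans (Int.gcd_dvd_right _ _) (Int.gcd_dvd_right _ _)
  have hgz : (g : ℤ) ≠ 0 := Int.natCast_ne_zero.mpr hg
  refine ⟨x', y', z', ?_, ?_⟩
  · rintro p hp ⟨⟨x2, hx2⟩, ⟨y2, hy2⟩, ⟨z2, hz2⟩⟩
    have hdx : ((g * p : ℕ) : ℤ) ∣ x := ⟨x2, by push_cast; rw [hx, hx2]; ring⟩
    have hdy : ((g * p : ℕ) : ℤ) ∣ y := ⟨y2, by push_cast; rw [hy, hy2]; ring⟩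
    have hdz : ((g * p : ℕ) : ℤ) ∣ z := ⟨z2, by push_cast; rw [hz, hz2]; ring⟩
    have : ((g * p : ℕ) : ℤ) ∣ (g : ℤ) := by
      rw [hgdef]
      exact Int.dvd_coe_gcd hdx (Int.dvd_coe_gcd hdy hdz)
    have hle : g * p ∣ g := Int.ofNat_dvd.mp (by exact_mod_cast this)
    have := Nat.le_of_dvd (Nat.pos_of_ne_zero hg) hle
    nlinarith [hp.two_le, Nat.pos_of_ne_zero hg]
  · have h2 : (g : ℤ) ^ 2 * (a * x' ^ 2 + b * y' ^ 2 + c * z' ^ 2) = 0 := by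
      rw [hx, hy, hz] at heq; linear_combination heq
    rcases mul_eq_zero.mp h2 with h | h
    · exact absurd h (pow_ne_zero 2 hgz)
    · exact h


lemma special {c : ℤ} (hc : c < 0)
    (h : ∃ f : ℤ, f ^ 2 ≡ -1 [ZMOD c]) :
    ∃ x y z : ℤ, (x, y, z) ≠ (0, 0, 0) ∧ x ^ 2 + y ^ 2 + c * z ^ 2 = 0 := by
  obtain ⟨f, hf⟩ := h
  have hC : ((-c).toNat : ℤ) = -c := Int.toNat_of_nonneg (by linarith)
  have hsq : IsSquare (-1 : ZMod (-c).toNat) := by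
    refine ⟨(f : ZMod (-c).toNat), ?_⟩
    have : ((f ^ 2 : ℤ) : ZMod (-c).toNat) = ((-1 : ℤ) : ZMod (-c).toNat) := by
      rw [ZMod.intCast_eq_intCast_iff]
      rw [hC]
      exact modEq_neg hf
    push_cast at this
    rw [← this]; ring
  obtain ⟨s, t, hst⟩ := Nat.eq_sq_add_sq_of_isSquare_mod_neg_one hsq
  refine ⟨(s : ℤ), (t : ℤ), 1, by simp, ?_⟩
  have : ((-c).toNat : ℤ) = ((s ^ 2 + t ^ 2 : ℕ) : ℤ) := by rw [hst]
  push_cast at this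
  rw [hC] at this
  nlinarith

lemma hbound_aux {m r s : ℕ} (hr : r < Nat.sqrt m + 1) (hs : s < Nat.sqrt m + 1) :
    ((s : ℤ) - (r : ℤ)) ^ 2 ≤ (m : ℤ) := by
  have h1 : (r : ℤ) ≤ (Nat.sqrt m : ℤ) := by exact_mod_cast Nat.lt_succ_iff.mp hr
  have h2 : (s : ℤ) ≤ (Nat.sqrt m : ℤ) := by exact_mod_cast Nat.lt_succ_iff.mp hs
  have h3 : (Nat.sqrt m : ℤ) * (Nat.sqrt m : ℤ) ≤ (m : ℤ) := by
    exact_mod_cast Nat.sqrt_le m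
  nlinarith [Nat.cast_nonneg (α := ℤ) r, Nat.cast_nonneg (α := ℤ) s]

lemma endgame (a b c u v w k : ℤ) (ha : 0 < a) (hb : 0 < b) (hc : c < 0)
    (hsa : Squarefree a) (hsb : Squarefree b)
    (hab : IsCoprime a b) (hbc : IsCoprime b c) (hca : IsCoprime c a)
    (hone : ¬(a = 1 ∧ b = 1))
    (hne : ¬(u = 0 ∧ v = 0 ∧ w = 0))
    (hu2 : u ^ 2 ≤ b * -c) (hv2 : v ^ 2 ≤ -c * a) (hw2 : w ^ 2 ≤ a * b)
    (hk : a * u ^ 2 + b * v ^ 2 + c * w ^ 2 = a * b * c * k) :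
    ∃ x y z : ℤ, (x, y, z) ≠ (0, 0, 0) ∧ a * x ^ 2 + b * y ^ 2 + c * z ^ 2 = 0 := by
  have habc : a * b * c < 0 := mul_neg_of_pos_of_neg (mul_pos ha hb) hc
  have hau : 0 ≤ a * u ^ 2 := mul_nonneg ha.le (sq_nonneg u)
  have hbv : 0 ≤ b * v ^ 2 := mul_nonneg hb.le (sq_nonneg v)
  have hcw : c * w ^ 2 ≤ 0 := mul_nonpos_of_nonpos_of_nonneg hc.le (sq_nonneg w)
  have hcw' : c * (a * b) ≤ c * w ^ 2 := by nlinarith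
  have hk1 : k ≤ 1 := by nlinarith
  have hk2 : -2 ≤ k := by nlinarith
  interval_cases k
  · -- k = -2
    exfalso
    have hw0 : c * w ^ 2 = 0 := by nlinarith
    have hu0 : a * u ^ 2 = a * (b * -c) := by nlinarith
    have hv0 : b * v ^ 2 = b * (-c * a) := by nlinarith
    have hu0' : b * -c = u ^ 2 := by
      have := mul_left_cancel₀ ha.ne' hu0.symm; linarith
    have hv0' : -c * a = v ^ 2 := by
      have := mul_left_cancel₀ hb.ne' hv0.symm; linarith
    have hb1 : b = 1 := helper1 hb hsb hbc.neg_right hu0'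
    have ha1 : a = 1 :=
      helper1 ha hsa (hca.neg_left.symm) (show a * -c = v ^ 2 by rw [← hv0']; ring)
    exact hone ⟨ha1, hb1⟩
  · -- k = -1
    refine ⟨u * w + b * v, v * w - a * u, w ^ 2 + a * b, ?_, ?_⟩
    · have hz : w ^ 2 + a * b ≠ 0 := by positivity
      simp only [Ne, Prod.mk.injEq, not_and]
      intro _ _
      exact hz
    · have hVeq : a * u ^ 2 + b * v ^ 2 + c * w ^ 2 + a * b * c = 0 := by linarith
      linear_combination (w ^ 2 + a * b) * hVeq
  · -- k = 0
    exact ⟨u, v, w, by simpa [Prod.ext_iff] using hne, by linarith⟩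
  · -- k = 1
    exfalso
    have hw0 : w ^ 2 = a * b := by nlinarith
    have ha1 : a = 1 := helper1 ha hsa hab hw0.symm
    have hb1 : b = 1 := helper1 hb hsb hab.symm (show b * a = w ^ 2 by rw [mul_comm]; exact hw0.symm)
    exact hone ⟨ha1, hb1⟩

set_option maxHeartbeats 1000000 in
lemma keyLemma (a b c : ℤ) (ha : 0 < a) (hb : 0 < b) (hc : c < 0)
    (hsa : Squarefree a) (hsb : Squarefree b)
    (hab : IsCoprime a b) (hbc : IsCoprime b c) (hca : IsCoprime c a)
    (h1 : ∃ d : ℤ, d ^ 2 ≡ -(b * c) [ZMOD a])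
    (h2 : ∃ e : ℤ, e ^ 2 ≡ -(c * a) [ZMOD b])
    (h3 : ∃ f : ℤ, f ^ 2 ≡ -(a * b) [ZMOD c]) :
    ∃ x y z : ℤ, (x, y, z) ≠ (0, 0, 0) ∧ a * x ^ 2 + b * y ^ 2 + c * z ^ 2 = 0 := by
  by_cases hone : a = 1 ∧ b = 1
  · obtain ⟨rfl, rfl⟩ := hone
    obtain ⟨x, y, z, hne, he⟩ := special hc (by simpa using h3)
    exact ⟨x, y, z, hne, by linarith⟩
  obtain ⟨d, hd⟩ := h1
  obtain ⟨e, he⟩ := h2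
  obtain ⟨f, hf⟩ := h3
  have hd' : a ∣ d ^ 2 + b * c := by
    have := Int.ModEq.dvd hd
    have h' : a ∣ -(b * c) - d ^ 2 := this
    have := h'.neg_right
    rwa [show -(-(b * c) - d ^ 2) = d ^ 2 + b * c by ring] at this
  have he' : b ∣ e ^ 2 + c * a := by
    have h' : b ∣ -(c * a) - e ^ 2 := Int.ModEq.dvd he
    have := h'.neg_right
    rwa [show -(-(c * a) - e ^ 2) = e ^ 2 + c * a by ring] at this
  have hf' : c ∣ f ^ 2 + a * b := by
    have h' : c ∣ -(a * b) - f ^ 2 := Int.ModEq.dvd hf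
    have := h'.neg_right
    rwa [show -(-(a * b) - f ^ 2) = f ^ 2 + a * b by ring] at this
  set A : ℕ := a.toNat with hAdef
  set B : ℕ := b.toNat with hBdef
  set C : ℕ := (-c).toNat with hCdef
  have hA : (A : ℤ) = a := Int.toNat_of_nonneg ha.le
  have hB : (B : ℤ) = b := Int.toNat_of_nonneg hb.le
  have hC : (C : ℤ) = -c := Int.toNat_of_nonneg (by linarith)
  have hA0 : 0 < A := by omega
  have hB0 : 0 < B := by omega
  have hC0 : 0 < C := by omega
  haveI : NeZero A := ⟨hA0.ne'⟩
  haveI : NeZero B := ⟨hB0.ne'⟩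
  haveI : NeZero C := ⟨hC0.ne'⟩
  set n1 : ℕ := Nat.sqrt (B * C) + 1 with hn1
  set n2 : ℕ := Nat.sqrt (C * A) + 1 with hn2
  set n3 : ℕ := Nat.sqrt (A * B) + 1 with hn3
  have hs1 : B * C < n1 * n1 := by
    simpa [hn1, Nat.succ_eq_add_one, pow_two] using Nat.lt_succ_sqrt' (B * C)
  have hs2 : C * A < n2 * n2 := by
    simpa [hn2, Nat.succ_eq_add_one, pow_two] using Nat.lt_succ_sqrt' (C * A)
  have hs3 : A * B < n3 * n3 := by
    simpa [hn3, Nat.succ_eq_add_one, pow_two] using Nat.lt_succ_sqrt' (A * B)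
  have hcard : (Finset.univ : Finset (ZMod A × ZMod B × ZMod C)).card
      < ((Finset.range n1) ×ˢ (Finset.range n2) ×ˢ (Finset.range n3)).card := by
    rw [Finset.card_product, Finset.card_product, Finset.card_univ]
    simp only [Finset.card_range, Fintype.card_prod, ZMod.card]
    by_contra hcc
    push_neg at hcc
    have k1 : (B * C) * ((C * A) * (A * B)) < (n1 * n1) * ((n2 * n2) * (n3 * n3)) :=
      Nat.mul_lt_mul'' hs1 (Nat.mul_lt_mul'' hs2 hs3)
    have k2 : (n1 * (n2 * n3)) * (n1 * (n2 * n3)) ≤ (A * (B * C)) * (A * (B * C)) :=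
      Nat.mul_le_mul hcc hcc
    have e1 : (B * C) * ((C * A) * (A * B)) = (A * (B * C)) * (A * (B * C)) := by ring
    have e2 : (n1 * n1) * ((n2 * n2) * (n3 * n3)) = (n1 * (n2 * n3)) * (n1 * (n2 * n3)) := by
      ring
    rw [e1, e2] at k1
    exact absurd k2 (Nat.not_le.mpr k1)
  set F : ℕ × ℕ × ℕ → ZMod A × ZMod B × ZMod C := fun t =>
    (((b * t.2.1 - d * t.2.2 : ℤ) : ZMod A),
     ((c * t.2.2 - e * t.1 : ℤ) : ZMod B),
     ((a * t.1 - f * t.2.1 : ℤ) : ZMod C)) with hF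
  obtain ⟨p, hp, q, hq, hpq, hFeq⟩ :=
    Finset.exists_ne_map_eq_of_card_lt_of_maps_to
      (t := (Finset.univ : Finset (ZMod A × ZMod B × ZMod C)))
      hcard (fun x _ => Finset.mem_univ (F x))
  simp only [Finset.mem_product, Finset.mem_range] at hp hq
  set u : ℤ := (q.1 : ℤ) - (p.1 : ℤ) with hu
  set v : ℤ := (q.2.1 : ℤ) - (p.2.1 : ℤ) with hv
  set w : ℤ := (q.2.2 : ℤ) - (p.2.2 : ℤ) with hw
  have key : ∀ {n : ℕ} {r s : ℤ}, ((r : ZMod n) = (s : ZMod n)) → (n : ℤ) ∣ s - r :=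
    fun h => Int.ModEq.dvd ((ZMod.intCast_eq_intCast_iff _ _ _).mp h)
  have hFa := congrArg Prod.fst hFeq
  have hFb := congrArg (fun t => t.2.1) hFeq
  have hFc := congrArg (fun t => t.2.2) hFeq
  simp only [hF] at hFa hFb hFc
  have hda : a ∣ b * v - d * w := by
    have := key hFa
    rw [hA] at this
    rwa [show (b * (q.2.1:ℤ) - d * (q.2.2:ℤ)) - (b * (p.2.1:ℤ) - d * (p.2.2:ℤ))
      = b * v - d * w by rw [hv, hw]; ring] at this
  have hdb : b ∣ c * w - e * u := by
    have := key hFb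
    rw [hB] at this
    rwa [show (c * (q.2.2:ℤ) - e * (q.1:ℤ)) - (c * (p.2.2:ℤ) - e * (p.1:ℤ))
      = c * w - e * u by rw [hu, hw]; ring] at this
  have hdc : c ∣ a * u - f * v := by
    have := key hFc
    rw [hC] at this
    rw [show (a * (q.1:ℤ) - f * (q.2.1:ℤ)) - (a * (p.1:ℤ) - f * (p.2.1:ℤ))
      = a * u - f * v by rw [hu, hv]; ring] at this
    exact (neg_dvd).mp this
  -- divisibility of the form value
  set V : ℤ := a * u ^ 2 + b * v ^ 2 + c * w ^ 2 with hVdef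
  have hVa : a ∣ V := by
    have k1 : a ∣ b * (b * v ^ 2 + c * w ^ 2) := by
      rw [show b * (b * v ^ 2 + c * w ^ 2)
        = (b * v - d * w) * (b * v + d * w) + (d ^ 2 + b * c) * w ^ 2 by ring]
      exact dvd_add (hda.mul_right _) (hd'.mul_right _)
    have k2 : a ∣ b * v ^ 2 + c * w ^ 2 := hab.dvd_of_dvd_mul_left k1
    rw [hVdef, add_assoc]
    exact dvd_add (dvd_mul_right a _) k2
  have hVb : b ∣ V := by
    have k1 : b ∣ c * (c * w ^ 2 + a * u ^ 2) := by
      rw [show c * (c * w ^ 2 + a * u ^ 2)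
        = (c * w - e * u) * (c * w + e * u) + (e ^ 2 + c * a) * u ^ 2 by ring]
      exact dvd_add (hdb.mul_right _) (he'.mul_right _)
    have k2 : b ∣ c * w ^ 2 + a * u ^ 2 := hbc.dvd_of_dvd_mul_left k1
    rw [show V = b * v ^ 2 + (c * w ^ 2 + a * u ^ 2) by rw [hVdef]; ring]
    exact dvd_add (dvd_mul_right b _) k2
  have hVc : c ∣ V := by
    have k1 : c ∣ a * (a * u ^ 2 + b * v ^ 2) := by
      rw [show a * (a * u ^ 2 + b * v ^ 2)
        = (a * u - f * v) * (a * u + f * v) + (f ^ 2 + a * b) * v ^ 2 by ring]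
      exact dvd_add (hdc.mul_right _) (hf'.mul_right _)
    have k2 : c ∣ a * u ^ 2 + b * v ^ 2 := hca.dvd_of_dvd_mul_left k1
    rw [show V = c * w ^ 2 + (a * u ^ 2 + b * v ^ 2) by rw [hVdef]; ring]
    exact dvd_add (dvd_mul_right c _) k2
  have hVabc : a * b * c ∣ V :=
    (IsCoprime.mul_left hca.symm hbc).mul_dvd (hab.mul_dvd hVa hVb) hVc
  obtain ⟨k, hk⟩ := hVabc
  -- size bounds
  have hu2 : u ^ 2 ≤ b * -c := by
    have := hbound_aux hp.1 hq.1
    rw [hu]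
    calc ((q.1:ℤ) - (p.1:ℤ)) ^ 2 ≤ ((B * C : ℕ) : ℤ) := this
      _ = b * -c := by push_cast [hB, hC]; ring
  have hv2 : v ^ 2 ≤ -c * a := by
    have := hbound_aux hp.2.1 hq.2.1
    rw [hv]
    calc ((q.2.1:ℤ) - (p.2.1:ℤ)) ^ 2 ≤ ((C * A : ℕ) : ℤ) := this
      _ = -c * a := by push_cast [hA, hC]; ring
  have hw2 : w ^ 2 ≤ a * b := by
    have := hbound_aux hp.2.2 hq.2.2
    rw [hw]
    calc ((q.2.2:ℤ) - (p.2.2:ℤ)) ^ 2 ≤ ((A * B : ℕ) : ℤ) := this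
      _ = a * b := by push_cast [hA, hB]; ring
  apply endgame a b c u v w k ha hb hc hsa hsb hab hbc hca hone _ hu2 hv2 hw2
  · rw [hVdef] at hk; linarith [hk]
  · rintro ⟨hu0, hv0, hw0⟩
    apply hpq
    have e1 : p.1 = q.1 := by rw [hu] at hu0; omega
    have e2 : p.2.1 = q.2.1 := by rw [hv] at hv0; omega
    have e3 : p.2.2 = q.2.2 := by rw [hw] at hw0; omega
    exact Prod.ext e1 (Prod.ext e2 e3)


lemma qr_neg {n m m' : ℤ} (hm : m' = m) (h : ∃ d : ℤ, d ^ 2 ≡ m [ZMOD n]) :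
    ∃ d : ℤ, d ^ 2 ≡ m' [ZMOD -n] := by
  obtain ⟨d, hd⟩ := h
  exact ⟨d, hm ▸ modEq_neg hd⟩

lemma qr_comm {n m m' : ℤ} (hm : m' = m) (h : ∃ d : ℤ, d ^ 2 ≡ m [ZMOD n]) :
    ∃ d : ℤ, d ^ 2 ≡ m' [ZMOD n] := by
  obtain ⟨d, hd⟩ := h
  exact ⟨d, hm ▸ hd⟩

lemma sq_zero_of {a x : ℤ} (ha : a ≠ 0) (h : a * x ^ 2 = 0) : x = 0 := by
  rcases mul_eq_zero.mp h with h | h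
  · exact absurd h ha
  · exact pow_eq_zero_iff two_ne_zero |>.mp h

theorem stmt_3 (a b c : ℤ) (ha : a ≠ 0) (hb : b ≠ 0) (hc : c ≠ 0)
    (hsa : Squarefree a) (hsb : Squarefree b) (hsc : Squarefree c)
    (hab : IsCoprime a b) (hbc : IsCoprime b c) (hca : IsCoprime c a) :
    (∃ x y z : ℤ, (x, y, z) ≠ (0, 0, 0) ∧ a * x ^ 2 + b * y ^ 2 + c * z ^ 2 = 0) ↔
      (¬ ((0 < a ∧ 0 < b ∧ 0 < c) ∨ (a < 0 ∧ b < 0 ∧ c < 0)) ∧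
        (∃ d : ℤ, d ^ 2 ≡ -(b * c) [ZMOD a]) ∧
        (∃ e : ℤ, e ^ 2 ≡ -(c * a) [ZMOD b]) ∧
        (∃ f : ℤ, f ^ 2 ≡ -(a * b) [ZMOD c])) := by
  constructor
  · rintro ⟨x, y, z, hne, heq⟩
    have hne' : ¬(x = 0 ∧ y = 0 ∧ z = 0) := by simpa [Prod.ext_iff] using hne
    obtain ⟨x', y', z', hprim, heq'⟩ := reduce hne heq
    refine ⟨?_, ?_, ?_, ?_⟩
    · rintro (⟨hA, hB, hC⟩ | ⟨hA, hB, hC⟩)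
      · have t1 : 0 ≤ a * x ^ 2 := mul_nonneg hA.le (sq_nonneg x)
        have t2 : 0 ≤ b * y ^ 2 := mul_nonneg hB.le (sq_nonneg y)
        have t3 : 0 ≤ c * z ^ 2 := mul_nonneg hC.le (sq_nonneg z)
        exact hne' ⟨sq_zero_of ha (by linarith), sq_zero_of hb (by linarith),
          sq_zero_of hc (by linarith)⟩
      · have t1 : a * x ^ 2 ≤ 0 := mul_nonpos_of_nonpos_of_nonneg hA.le (sq_nonneg x)
        have t2 : b * y ^ 2 ≤ 0 := mul_nonpos_of_nonpos_of_nonneg hB.le (sq_nonneg y)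
        have t3 : c * z ^ 2 ≤ 0 := mul_nonpos_of_nonpos_of_nonneg hC.le (sq_nonneg z)
        exact hne' ⟨sq_zero_of ha (by linarith), sq_zero_of hb (by linarith),
          sq_zero_of hc (by linarith)⟩
    · exact qr_aux hsa hab hprim heq'
    · exact qr_aux hsb hbc (fun p hp h => hprim p hp ⟨h.2.2, h.1, h.2.1⟩) (by linarith)
    · exact qr_aux hsc hca (fun p hp h => hprim p hp ⟨h.2.1, h.2.2, h.1⟩) (by linarith)
  · rintro ⟨hsign, h1, h2, h3⟩
    rcases ha.lt_or_gt with hA | hA <;> rcases hb.lt_or_gt with hB | hB <;>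
      rcases hc.lt_or_gt with hC | hC
    · -- (-,-,-)
      exact absurd (Or.inr ⟨hA, hB, hC⟩) hsign
    · -- (-,-,+)
      obtain ⟨x, y, z, hne, heq⟩ := keyLemma (-a) (-b) (-c) (by linarith) (by linarith)
        (by linarith) (squarefree_neg hsa) (squarefree_neg hsb)
        (hab.neg_left.neg_right) (hbc.neg_left.neg_right) (hca.neg_left.neg_right)
        (qr_neg (by ring) h1) (qr_neg (by ring) h2) (qr_neg (by ring) h3)
      exact ⟨x, y, z, hne, by linarith⟩
    · -- (-,+,-)
      obtain ⟨x, y, z, hne, heq⟩ := keyLemma (-a) (-c) (-b) (by linarith) (by linarith)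
        (by linarith) (squarefree_neg hsa) (squarefree_neg hsc)
        (hca.symm.neg_left.neg_right) (hbc.symm.neg_left.neg_right)
        (hab.symm.neg_left.neg_right)
        (qr_neg (by ring) h1) (qr_neg (by ring) h3) (qr_neg (by ring) h2)
      have hne' : ¬(x = 0 ∧ y = 0 ∧ z = 0) := by simpa [Prod.ext_iff] using hne
      refine ⟨x, z, y, by simp only [ne_eq, Prod.mk.injEq]; tauto, by linarith⟩
    · -- (-,+,+)
      obtain ⟨x, y, z, hne, heq⟩ := keyLemma b c a hB hC hA hsb hsc hbc hca hab h2 h3 h1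
      have hne' : ¬(x = 0 ∧ y = 0 ∧ z = 0) := by simpa [Prod.ext_iff] using hne
      refine ⟨z, x, y, by simp only [ne_eq, Prod.mk.injEq]; tauto, by linarith⟩
    · -- (+,-,-)
      obtain ⟨x, y, z, hne, heq⟩ := keyLemma (-b) (-c) (-a) (by linarith) (by linarith)
        (by linarith) (squarefree_neg hsb) (squarefree_neg hsc)
        (hbc.neg_left.neg_right) (hca.neg_left.neg_right) (hab.neg_left.neg_right)
        (qr_neg (by ring) h2) (qr_neg (by ring) h3) (qr_neg (by ring) h1)
      have hne' : ¬(x = 0 ∧ y = 0 ∧ z = 0) := by simpa [Prod.ext_iff] using hne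
      refine ⟨z, x, y, by simp only [ne_eq, Prod.mk.injEq]; tauto, by linarith⟩
    · -- (+,-,+)
      obtain ⟨x, y, z, hne, heq⟩ := keyLemma a c b hA hC hB hsa hsc hca.symm hbc.symm
        hab.symm (qr_comm (by ring) h1) (qr_comm (by ring) h3) (qr_comm (by ring) h2)
      have hne' : ¬(x = 0 ∧ y = 0 ∧ z = 0) := by simpa [Prod.ext_iff] using hne
      refine ⟨x, z, y, by simp only [ne_eq, Prod.mk.injEq]; tauto, by linarith⟩
    · -- (+,+,-)
      exact keyLemma a b c hA hB hC hsa hsb hab hbc hca h1 h2 h3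
    · -- (+,+,+)
      exact absurd (Or.inl ⟨hA, hB, hC⟩) hsign
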